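/- Let L_w = L + L̂ ε be the dual Laplacian of a connected dual number weighted graph on n vertices and J the all-ones matrix. Then L_w + (1/n) J is invertible over the dual numbers and L_w† = (L_w + (1/n) J)^{-1} - (1/n) J. -/

import Mathlib

open Matrix

/-- The dual matrix `A_s + A_d ε` built from its standard and infinitesimal parts. -/
def dm {m n : Type*} (A B : Matrix m n ℝ) : Matrix m n (DualNumber ℝ) :=
  Matrix.of fun i j => TrivSqZeroExt.inl (A i j) + TrivSqZeroExt.inr (B i j)

lemma aux_zero {n : ℕ} (hn : 0 < n) (G : SimpleGraph (Fin n)) [DecidableRel G.Adj]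
    (hG : G.Connected) (M : Matrix (Fin n) (Fin n) ℝ) (hMs : Mᵀ = M)
    (hLM : G.lapMatrix ℝ * M = 0) (hM1 : M *ᵥ (fun _ => (1:ℝ)) = 0) : M = 0 := by
  have hcol : ∀ j i i', M i j = M i' j := by
    intro j i i'
    have hz : Matrix.toLin' (G.lapMatrix ℝ) (fun k => M k j) = 0 := by
      rw [Matrix.toLin'_apply]
      funext i0
      have := congrFun (congrFun hLM i0) j
      simpa [Matrix.mul_apply, Matrix.mulVec, dotProduct] using this
    exact (G.lapMatrix_mulVec_eq_zero_iff_forall_reachable.mp (by rwa [Matrix.toLin'_apply] at hz)) i i' (hG.preconnected i i')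
  obtain ⟨i0⟩ : Nonempty (Fin n) := ⟨⟨0, hn⟩⟩
  have hconst : ∀ i j, M i j = M i0 i0 := by
    intro i j
    calc M i j = M i0 j := hcol j i i0
    _ = M j i0 := by conv_lhs => rw [← hMs, Matrix.transpose_apply]
    _ = M i0 i0 := hcol i0 j i0
  have hsum : ∑ j, M i0 j = 0 := by
    have := congrFun hM1 i0
    simpa [Matrix.mulVec, dotProduct] using this
  have hmul : (n : ℝ) * M i0 i0 = 0 := by
    calc (n : ℝ) * M i0 i0 = ∑ _j : Fin n, M i0 i0 := by simp [mul_comm]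
    _ = ∑ j, M i0 j := Finset.sum_congr rfl fun j _ => (hconst i0 j).symm
    _ = 0 := hsum
  have hn0 : (n : ℝ) ≠ 0 := Nat.cast_ne_zero.mpr hn.ne'
  have h00 : M i0 i0 = 0 := by
    rcases mul_eq_zero.mp hmul with h | h
    · exact absurd h hn0
    · exact h
  ext i j
  rw [hconst i j, h00]; rfl

lemma dm_add {m : Type*} (A B C D : Matrix m m ℝ) :
    dm A B + dm C D = dm (A + C) (B + D) := by
  ext i j <;> simp [dm]

lemma dm_mul {m : Type*} [Fintype m] (A B C D : Matrix m m ℝ) :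
    dm A B * dm C D = dm (A * C) (A * D + B * C) := by
  ext i j
  · rw [Matrix.mul_apply, TrivSqZeroExt.fst_sum]
    simp [dm, Matrix.mul_apply]
  · rw [Matrix.mul_apply, TrivSqZeroExt.snd_sum]
    simp [dm, Matrix.mul_apply, Finset.sum_add_distrib, mul_comm, add_comm]

lemma dm_one {m : Type*} [Fintype m] [DecidableEq m] :
    dm (1 : Matrix m m ℝ) 0 = (1 : Matrix m m (DualNumber ℝ)) := by
  ext i j <;> simp [dm, Matrix.one_apply, apply_ite]

lemma dm_smul {m : Type*} (c : ℝ) :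
    c • Matrix.of (fun _ _ => (1 : DualNumber ℝ)) = dm (c • Matrix.of (fun (_ _ : m) => (1:ℝ))) 0 := by
  ext i j <;> simp [dm]

/-- For the dual Laplacian `L_w` of a connected dual number weighted graph on `n` vertices,
`L_w + (1/n) J` is invertible over the dual numbers and
`L_w† = (L_w + (1/n) J)⁻¹ - (1/n) J`, where `L_w† = L† - L† L̂ L† ε`. -/
theorem dual_laplacian_mp_via_inverse {n : ℕ} (hn : 0 < n)
    (G : SimpleGraph (Fin n)) [DecidableRel G.Adj] (hG : G.Connected)
    (Lhat : Matrix (Fin n) (Fin n) ℝ) (hsym : Lhatᵀ = Lhat)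
    (hrow : Lhat *ᵥ (fun _ => (1 : ℝ)) = 0)
    (hcol : (fun _ => (1 : ℝ)) ᵥ* Lhat = 0)
    (Ld : Matrix (Fin n) (Fin n) ℝ)
    (h1 : G.lapMatrix ℝ * Ld * G.lapMatrix ℝ = G.lapMatrix ℝ)
    (h2 : Ld * G.lapMatrix ℝ * Ld = Ld)
    (h3 : (G.lapMatrix ℝ * Ld)ᵀ = G.lapMatrix ℝ * Ld)
    (h4 : (Ld * G.lapMatrix ℝ)ᵀ = Ld * G.lapMatrix ℝ) :
    IsUnit (dm (G.lapMatrix ℝ) Lhat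
        + (n : ℝ)⁻¹ • Matrix.of (fun _ _ => (1 : DualNumber ℝ))) ∧
      dm Ld (-(Ld * Lhat * Ld))
        = (dm (G.lapMatrix ℝ) Lhat
            + (n : ℝ)⁻¹ • Matrix.of (fun _ _ => (1 : DualNumber ℝ)))⁻¹
          - (n : ℝ)⁻¹ • Matrix.of (fun _ _ => (1 : DualNumber ℝ)) := by
  set L := G.lapMatrix ℝ with hLdef
  set c : ℝ := (n : ℝ)⁻¹ with hcdef
  set J : Matrix (Fin n) (Fin n) ℝ := Matrix.of (fun _ _ => (1:ℝ)) with hJdef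
  have hn0 : (n : ℝ) ≠ 0 := Nat.cast_ne_zero.mpr hn.ne'
  have hcn : c * (n : ℝ) = 1 := inv_mul_cancel₀ hn0
  have hLs : Lᵀ = L := G.isSymm_lapMatrix ℝ
  have hL1 : L *ᵥ (fun _ => (1:ℝ)) = 0 := G.lapMatrix_mulVec_const_eq_zero
  -- basic J identities
  have hJJ : J * J = (n : ℝ) • J := by
    ext i j; simp [hJdef, Matrix.mul_apply]
  have hLJ : L * J = 0 := by
    ext i j
    have := congrFun hL1 i
    simpa [Matrix.mul_apply, Matrix.mulVec, dotProduct, hJdef] using this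
  have hJL : J * L = 0 := by
    ext i j
    have := congrFun hL1 j
    rw [← hLs] at this
    simp only [Matrix.mulVec, dotProduct, Matrix.transpose_apply] at this
    simpa [Matrix.mul_apply, hJdef] using this
  have hLhJ : Lhat * J = 0 := by
    ext i j
    have := congrFun hrow i
    simpa [Matrix.mul_apply, Matrix.mulVec, dotProduct, hJdef] using this
  have hJLh : J * Lhat = 0 := by
    ext i j
    have := congrFun hcol j
    simpa [Matrix.mul_apply, Matrix.vecMul, dotProduct, hJdef] using this
  set K : Matrix (Fin n) (Fin n) ℝ := 1 - c • J with hKdef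
  have hKs : Kᵀ = K := by
    have hJs : Jᵀ = J := by ext i j; rfl
    rw [hKdef, Matrix.transpose_sub, Matrix.transpose_one, Matrix.transpose_smul, hJs]
  have hKJ : K * J = 0 := by
    rw [hKdef, Matrix.sub_mul, Matrix.one_mul, Matrix.smul_mul, hJJ, smul_smul, hcn,
      one_smul, sub_self]
  have hJK : J * K = 0 := by
    rw [hKdef, Matrix.mul_sub, Matrix.mul_one, Matrix.mul_smul, hJJ, smul_smul, hcn,
      one_smul, sub_self]
  have hKL : K * L = L := by
    rw [hKdef, Matrix.sub_mul, Matrix.one_mul, Matrix.smul_mul, hJL, smul_zero, sub_zero]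
  have hLK : L * K = L := by
    rw [hKdef, Matrix.mul_sub, Matrix.mul_one, Matrix.mul_smul, hLJ, smul_zero, sub_zero]
  have hK1 : K *ᵥ (fun _ => (1:ℝ)) = 0 := by
    funext i
    simp [hKdef, Matrix.sub_mulVec, Matrix.smul_mulVec, Matrix.mulVec, dotProduct,
      hJdef, hcdef, inv_mul_cancel₀ hn0, Matrix.one_apply, mul_inv_cancel₀ hn0]
  -- L * Ld = K
  have hP : L * Ld = K := by
    have hMs : (L * Ld - K)ᵀ = L * Ld - K := by
      rw [Matrix.transpose_sub, h3, hKs]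
    have hML : (L * Ld - K) * L = 0 := by
      rw [Matrix.sub_mul, h1, hKL, sub_self]
    have hLM : L * (L * Ld - K) = 0 := by
      have : (L * (L * Ld - K))ᵀ = 0 := by
        rw [Matrix.transpose_mul, hMs, hLs, hML]
      calc L * (L * Ld - K) = ((L * (L * Ld - K))ᵀ)ᵀ := (Matrix.transpose_transpose _).symm
      _ = 0 := by rw [this]; simp
    have hM1 : (L * Ld - K) *ᵥ (fun _ => (1:ℝ)) = 0 := by
      have hP1 : (L * Ld) *ᵥ (fun _ => (1:ℝ)) = 0 := by
        have : L * Ld = Ldᵀ * L := by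
          conv_lhs => rw [← h3]
          rw [Matrix.transpose_mul, hLs]
        rw [this, ← Matrix.mulVec_mulVec, hL1, Matrix.mulVec_zero]
      rw [Matrix.sub_mulVec, hP1, hK1, sub_self]
    have := aux_zero hn G hG _ hMs hLM hM1
    rwa [sub_eq_zero] at this
  -- Ld * L = K
  have hQ : Ld * L = K := by
    have hMs : (Ld * L - K)ᵀ = Ld * L - K := by
      rw [Matrix.transpose_sub, h4, hKs]
    have hLM : L * (Ld * L - K) = 0 := by
      rw [Matrix.mul_sub, ← Matrix.mul_assoc, h1, hLK, sub_self]
    have hM1 : (Ld * L - K) *ᵥ (fun _ => (1:ℝ)) = 0 := by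
      rw [Matrix.sub_mulVec, ← Matrix.mulVec_mulVec, hL1, Matrix.mulVec_zero, hK1, sub_self]
    have := aux_zero hn G hG _ hMs hLM hM1
    rwa [sub_eq_zero] at this
  have hLdJ : Ld * J = 0 := by
    calc Ld * J = (Ld * (L * Ld)) * J := by rw [← Matrix.mul_assoc, h2]
    _ = Ld * (K * J) := by rw [hP, Matrix.mul_assoc]
    _ = 0 := by rw [hKJ, Matrix.mul_zero]
  have hJLd : J * Ld = 0 := by
    calc J * Ld = J * ((Ld * L) * Ld) := by rw [h2]
    _ = (J * K) * Ld := by rw [hQ, Matrix.mul_assoc]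
    _ = 0 := by rw [hJK, Matrix.zero_mul]
  -- real identities
  have r1 : (L + c • J) * (Ld + c • J) = 1 := by
    rw [Matrix.add_mul, Matrix.mul_add, Matrix.mul_add, Matrix.smul_mul, Matrix.smul_mul,
      Matrix.mul_smul, Matrix.mul_smul, hP, hLJ, hJLd, hJJ, smul_zero, add_zero, zero_add,
      smul_smul, smul_smul, mul_assoc, hcn, mul_one, hKdef, sub_add_cancel]
  have r2 : (Ld + c • J) * (L + c • J) = 1 := by
    rw [Matrix.add_mul, Matrix.mul_add, Matrix.mul_add, Matrix.smul_mul, Matrix.smul_mul,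
      Matrix.mul_smul, Matrix.mul_smul, hQ, hLdJ, hJL, hJJ, smul_zero, add_zero, zero_add,
      smul_smul, smul_smul, mul_assoc, hcn, mul_one, hKdef, sub_add_cancel]
  have d1 : (L + c • J) * (-(Ld * Lhat * Ld)) + Lhat * (Ld + c • J) = 0 := by
    have e1 : L * (Ld * Lhat * Ld) = Lhat * Ld := by
      calc L * (Ld * Lhat * Ld) = (L * Ld) * (Lhat * Ld) := by
            simp only [Matrix.mul_assoc]
      _ = K * (Lhat * Ld) := by rw [hP]
      _ = Lhat * Ld := by
            rw [hKdef, Matrix.sub_mul, Matrix.one_mul, Matrix.smul_mul, ← Matrix.mul_assoc,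
              hJLh, Matrix.zero_mul, smul_zero, sub_zero]
    have e2 : J * (Ld * Lhat * Ld) = 0 := by
      rw [Matrix.mul_assoc Ld Lhat Ld, ← Matrix.mul_assoc, hJLd, Matrix.zero_mul]
    rw [Matrix.add_mul, Matrix.mul_add, Matrix.mul_neg, Matrix.mul_neg, Matrix.smul_mul,
      Matrix.mul_smul, e1, e2, hLhJ, smul_zero]
    abel
  have d2 : (Ld + c • J) * Lhat + (-(Ld * Lhat * Ld)) * (L + c • J) = 0 := by
    have e1 : (Ld * Lhat * Ld) * L = Ld * Lhat := by
      calc (Ld * Lhat * Ld) * L = (Ld * Lhat) * (Ld * L) := by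
            simp only [Matrix.mul_assoc]
      _ = (Ld * Lhat) * K := by rw [hQ]
      _ = Ld * Lhat := by
            rw [hKdef, Matrix.mul_sub, Matrix.mul_one, Matrix.mul_smul, Matrix.mul_assoc,
              hLhJ, Matrix.mul_zero, smul_zero, sub_zero]
    have e2 : (Ld * Lhat * Ld) * J = 0 := by
      rw [Matrix.mul_assoc, hLdJ, Matrix.mul_zero]
    rw [Matrix.add_mul, Matrix.mul_add, Matrix.neg_mul, Matrix.neg_mul, Matrix.smul_mul,
      Matrix.mul_smul, e1, e2, hJLh, smul_zero]
    abel
  -- assemble over dual numbers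
  set Jd : Matrix (Fin n) (Fin n) (DualNumber ℝ) :=
    (n : ℝ)⁻¹ • Matrix.of (fun _ _ => (1 : DualNumber ℝ)) with hJddef
  have hJd : Jd = dm (c • J) 0 := by
    rw [hJddef, dm_smul]
  have hA : dm L Lhat + Jd = dm (L + c • J) Lhat := by
    rw [hJd, dm_add, add_zero]
  have hB : dm Ld (-(Ld * Lhat * Ld)) + Jd = dm (Ld + c • J) (-(Ld * Lhat * Ld)) := by
    rw [hJd, dm_add, add_zero]
  have hAB : (dm L Lhat + Jd) * (dm Ld (-(Ld * Lhat * Ld)) + Jd) = 1 := by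
    rw [hA, hB, dm_mul, r1, d1, dm_one]
  have hBA : (dm Ld (-(Ld * Lhat * Ld)) + Jd) * (dm L Lhat + Jd) = 1 := by
    rw [hA, hB, dm_mul, r2, d2, dm_one]
  refine ⟨⟨⟨_, _, hAB, hBA⟩, rfl⟩, ?_⟩
  have hinv : (dm L Lhat + Jd)⁻¹ = dm Ld (-(Ld * Lhat * Ld)) + Jd :=
    Matrix.inv_eq_left_inv hBA
  rw [hinv, add_sub_cancel_right]
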